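/- Let h : ℕ → ℕ be injective with h(i) ≥ 1 for all i, and let τ : ℕ → ℝ be defined by τ(i) = 2^{−h(i)/2} if h(i) < i and τ(i) = 2^{−i/2} otherwise. For k ∈ ℕ write T_{k+1} = Σ_{i=k+1}^∞ τ(i). Then (Σ_{i=k+2}^∞ 2^{−h(i)}) / T_{k+1} → 0 as k → ∞. -/

import Mathlib

open Filter

lemma aux_rpow_nat (n : ℕ) : (2 : ℝ) ^ (-(n : ℝ) / 2) = ((2:ℝ) ^ (-(1:ℝ)/2)) ^ n := by
  rw [← Real.rpow_natCast ((2:ℝ) ^ (-(1:ℝ)/2)) n, ← Real.rpow_mul (by norm_num)]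
  ring_nf

lemma aux_summable_g (h : ℕ → ℕ) (hinj : Function.Injective h) :
    Summable (fun i => (2 : ℝ) ^ (-(h i : ℝ) / 2)) := by
  have : Summable (fun n : ℕ => ((2:ℝ) ^ (-(1:ℝ)/2)) ^ n) := by
    apply summable_geometric_of_lt_one (le_of_lt (Real.rpow_pos_of_pos (by norm_num) _))
    rw [show (1:ℝ) = (2:ℝ) ^ (0:ℝ) by simp]
    exact Real.rpow_lt_rpow_of_exponent_lt (by norm_num) (by norm_num)
  have := this.comp_injective hinj
  simpa [Function.comp_def, ← aux_rpow_nat] using this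

theorem stmt_18 (h : ℕ → ℕ) (hinj : Function.Injective h) (hpos : ∀ i, 1 ≤ h i)
    (τ : ℕ → ℝ)
    (hτ : ∀ i, τ i =
      if h i < i then (2 : ℝ) ^ (-(h i : ℝ) / 2) else (2 : ℝ) ^ (-(i : ℝ) / 2)) :
    Tendsto (fun k : ℕ =>
        (∑' i : ℕ, (2 : ℝ) ^ (-(h (k + 2 + i) : ℝ))) / (∑' i : ℕ, τ (k + 1 + i)))
      atTop (nhds 0) := by
  set g : ℕ → ℝ := fun i => (2 : ℝ) ^ (-(h i : ℝ) / 2) with hg_def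
  have hg : Summable g := aux_summable_g h hinj
  have hgpos : ∀ i, 0 < g i := fun i => Real.rpow_pos_of_pos (by norm_num) _
  have hτpos : ∀ i, 0 < τ i := by
    intro i; rw [hτ i]
    split <;> exact Real.rpow_pos_of_pos (by norm_num) _
  have hgτ : ∀ i, g i ≤ τ i := by
    intro i; rw [hτ i]
    split
    · exact le_refl _
    · rename_i hc
      exact Real.rpow_le_rpow_of_exponent_le (by norm_num)
        (by push_neg at hc; have := (Nat.cast_le (α := ℝ)).2 hc; linarith)
  have hτcomp : ∀ i, τ i ≤ g i + (2:ℝ) ^ (-(i:ℝ)/2) := by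
    intro i; rw [hτ i]; split
    · have : (0:ℝ) < (2:ℝ) ^ (-(i:ℝ)/2) := Real.rpow_pos_of_pos (by norm_num) _
      simp [hg_def]; linarith
    · have := hgpos i; simp [hg_def] at this ⊢; linarith
  have hτsum : Summable τ := by
    refine Summable.of_nonneg_of_le (fun i => (hτpos i).le) hτcomp ?_
    exact hg.add (aux_summable_g id (fun a b => id))
  have hNsum : Summable (fun i => (2 : ℝ) ^ (-(h i : ℝ))) := by
    refine Summable.of_nonneg_of_le
      (fun i => (Real.rpow_pos_of_pos (by norm_num) _).le) (fun i => ?_) hg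
    exact Real.rpow_le_rpow_of_exponent_le (by norm_num)
      (by have : (1:ℝ) ≤ (h i : ℝ) := by exact_mod_cast hpos i
          linarith)
  -- tail sums
  set S : ℕ → ℝ := fun k => ∑' i : ℕ, g (k + 2 + i) with hS_def
  have hStend : Tendsto S atTop (nhds 0) := by
    have h1 : Tendsto (fun n : ℕ => ∑' i : ℕ, g (i + n)) atTop (nhds 0) :=
      tendsto_sum_nat_add g
    have h2 : Tendsto (fun k : ℕ => ∑' i : ℕ, g (i + (k + 2))) atTop (nhds 0) :=
      h1.comp (tendsto_add_atTop_nat 2)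
    convert h2 using 2 with k
    exact tsum_congr fun i => by rw [add_comm]
  refine squeeze_zero (fun k => ?_) (fun k => ?_) hStend
  · exact div_nonneg (tsum_nonneg fun i => (Real.rpow_pos_of_pos (by norm_num) _).le)
      (tsum_nonneg fun i => (hτpos _).le)
  · set D : ℝ := ∑' i : ℕ, τ (k + 1 + i) with hD_def
    have hτtail : Summable (fun i => τ (k + 1 + i)) :=
      hτsum.comp_injective (fun a b hab => by omega)
    have hgtail : Summable (fun i => g (k + 2 + i)) :=
      hg.comp_injective (fun a b hab => by omega)
    have hDge : ∀ i, g (k + 2 + i) ≤ D := by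
      intro i
      have h1 : τ (k + 1 + (1 + i)) ≤ D :=
        Summable.le_tsum hτtail (1 + i) (fun j _ => (hτpos _).le)
      have h2 : k + 1 + (1 + i) = k + 2 + i := by omega
      rw [h2] at h1
      exact le_trans (hgτ _) h1
    have hDpos : 0 < D := lt_of_lt_of_le (hτpos (k + 1 + 0))
        (Summable.le_tsum hτtail 0 (fun j _ => (hτpos _).le))
    rw [div_le_iff₀ hDpos]
    calc (∑' i : ℕ, (2 : ℝ) ^ (-(h (k + 2 + i) : ℝ)))
        ≤ ∑' i : ℕ, D * g (k + 2 + i) := by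
          refine Summable.tsum_le_tsum (fun i => ?_)
            (hNsum.comp_injective (fun a b hab => by omega)) (hgtail.mul_left D)
          have hsq : (2 : ℝ) ^ (-(h (k + 2 + i) : ℝ)) = g (k+2+i) * g (k+2+i) := by
            rw [hg_def, ← Real.rpow_add (by norm_num)]; ring_nf
          rw [hsq]
          exact mul_le_mul_of_nonneg_right (hDge i) (hgpos _).le
      _ = D * S k := tsum_mul_left
      _ = S k * D := mul_comm _ _
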